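/- Assume π⁻ ≤ α_r·πʷ ≤ π⁺. For all g₁ ≤ g₂ with g₂ < Γ_IM, the value function satisfies Π*(g₂) − Π*(g₁) = π⁺·(g₂ − g₁); in particular the maximum profit increases with renewable generation at rate π⁺ in the import region. -/
import Mathlib


open Set

noncomputable section

/-- Net electricity exchange. -/
def netz (αr ηh wh wr g : ℝ) : ℝ := wr / αr - wh / ηh - g

/-- Electricity payment under net metering. -/
def epay (πp πm π0 αr ηh wh wr g : ℝ) : ℝ :=
  πp * max (netz αr ηh wh wr g) 0 + πm * min (netz αr ηh wh wr g) 0 + π0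

/-- WDP profit. -/
def profit (πw πp πm π0 αr αh ηh : ℝ) (C : ℝ → ℝ) (wh wr g : ℝ) : ℝ :=
  πw * (wh + wr) - epay πp πm π0 αr ηh wh wr g - C (wh / αh)

/-- clamp(x, a, b) = max(a, min(x, b)). -/
def clampR (x a b : ℝ) : ℝ := max a (min x b)

/-- Value function: sup of profit over the feasible rectangle. -/
def Pstar (πw πp πm π0 αr αh ηh : ℝ) (C : ℝ → ℝ) (wlh wuh wlr wur g : ℝ) : ℝ :=
  sSup ((fun p : ℝ × ℝ => profit πw πp πm π0 αr αh ηh C p.1 p.2 g) ''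
    (Icc wlh wuh ×ˢ Icc wlr wur))

/-- in the import region, the value function grows at rate π⁺. -/
theorem value_slope_IM
    (πp πm π0 πw αh ηh αr wlh wuh wlr wur : ℝ) (C : ℝ → ℝ)
    (hπ : πm ≤ πp) (hπm : 0 ≤ πm) (hπw : 0 ≤ πw)
    (hαh : 0 < αh) (hηh : 0 < ηh) (hαr : 0 < αr)
    (hwlh : 0 ≤ wlh) (hwhb : wlh ≤ wuh) (hwlr : 0 ≤ wlr) (hwrb : wlr ≤ wur)
    (hC : StrictConvexOn ℝ univ C) (hCd : Differentiable ℝ C) (hCm : Monotone C)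
    (Wfun : ℝ → ℝ)
    (hWfun : ∀ δ : ℝ, Wfun δ ∈ Icc wlh wuh ∧
      ∀ w ∈ Icc wlh wuh,
        (πw + δ / ηh) * w - C (w / αh) ≤ (πw + δ / ηh) * Wfun δ - C (Wfun δ / αh))
    (hmid1 : πm ≤ αr * πw) (hmid2 : αr * πw ≤ πp) :
    ∀ g₁ g₂ : ℝ, g₁ ≤ g₂ → g₂ < wlr / αr - Wfun πp / ηh →
      Pstar πw πp πm π0 αr αh ηh C wlh wuh wlr wur g₂ -
        Pstar πw πp πm π0 αr αh ηh C wlh wuh wlr wur g₁ = πp * (g₂ - g₁) := by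
  intro g₁ g₂ hle hIM
  set W := Wfun πp with hW
  have hWmem := (hWfun πp).1
  have hWmax := (hWfun πp).2
  -- key formula
  have key : ∀ g : ℝ, g < wlr / αr - W / ηh →
      Pstar πw πp πm π0 αr αh ηh C wlh wuh wlr wur g =
        ((πw + πp / ηh) * W - C (W / αh)) + (πw - πp / αr) * wlr + πp * g - π0 := by
    intro g hg
    apply IsGreatest.csSup_eq
    constructor
    · refine ⟨(W, wlr), ⟨hWmem, ⟨le_refl _, hwrb⟩⟩, ?_⟩
      have hz : 0 ≤ netz αr ηh W wlr g := by
        simp only [netz]; linarith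
      simp only [profit, epay]
      rw [max_eq_left hz, min_eq_right hz]
      simp only [netz]
      field_simp
      ring
    · rintro x ⟨⟨wh, wr⟩, ⟨⟨hwh1, hwh2⟩, ⟨hwr1, hwr2⟩⟩, rfl⟩
      simp only [profit, epay]
      set z := netz αr ηh wh wr g with hz
      have hpay : πp * z ≤ πp * max z 0 + πm * min z 0 := by
        rcases le_or_gt 0 z with h | h
        · rw [max_eq_left h, min_eq_right h]; simp
        · rw [max_eq_right h.le, min_eq_left h.le]
          nlinarith
      have h1 : (πw + πp / ηh) * wh - C (wh / αh) ≤ (πw + πp / ηh) * W - C (W / αh) :=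
        hWmax wh ⟨hwh1, hwh2⟩
      have h2 : (πw - πp / αr) * wr ≤ (πw - πp / αr) * wlr := by
        apply mul_le_mul_of_nonpos_left hwr1
        have : πw ≤ πp / αr := by
          rw [le_div_iff₀ hαr]; linarith [hmid2]
        linarith
      have hexp : πw * (wh + wr) - (πp * z + π0) - C (wh / αh) =
          ((πw + πp / ηh) * wh - C (wh / αh)) + (πw - πp / αr) * wr + πp * g - π0 := by
        simp only [hz, netz]; field_simp; ring
      linarith [hpay, h1, h2]
  have hg1 : g₁ < wlr / αr - W / ηh := lt_of_le_of_lt hle hIM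
  rw [key g₂ hIM, key g₁ hg1]
  ring
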